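/- The group G with presentation ⟨a, b, c, t | a² = t, b³ = t, c⁷ = t, abc = t³⟩ is not left-orderable; in fact it admits no left-invariant total order. -/

import Mathlib

set_option maxRecDepth 10000

/-- The relations `a² = t`, `b³ = t`, `c⁷ = t`, `abc = t³` in the free group on
generators `a = 0`, `b = 1`, `c = 2`, `t = 3`. -/
def seifertRels : Set (FreeGroup (Fin 4)) :=
  { (FreeGroup.of 0) ^ 2 * (FreeGroup.of 3)⁻¹,
    (FreeGroup.of 1) ^ 3 * (FreeGroup.of 3)⁻¹,
    (FreeGroup.of 2) ^ 7 * (FreeGroup.of 3)⁻¹,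
    (FreeGroup.of 0) * (FreeGroup.of 1) * (FreeGroup.of 2) * ((FreeGroup.of 3) ^ 3)⁻¹ }

namespace Stmt16Aux

/-- `(3 4)(5 6)`, an element of order 2. -/
def px : Equiv.Perm (Fin 7) := Equiv.swap 3 4 * Equiv.swap 5 6
/-- `(0 1 3)(2 4 5)`, an element of order 3 with `px * py` of order 7. -/
def py : Equiv.Perm (Fin 7) := (Equiv.swap 0 1 * Equiv.swap 1 3) * (Equiv.swap 2 4 * Equiv.swap 4 5)

/-- Assignment of the generators realizing the relations in `Perm (Fin 7)` (with `t ↦ 1`). -/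
def pf : Fin 4 → Equiv.Perm (Fin 7) := ![px, py, (px * py)⁻¹, 1]

lemma pf_rels : ∀ r ∈ seifertRels, FreeGroup.lift pf r = 1 := by
  intro r hr
  rcases hr with h | h | h | h <;> subst h <;>
    simp only [map_mul, map_pow, map_inv, FreeGroup.lift_apply_of, pf, Matrix.cons_val_zero,
      Matrix.cons_val_one, Matrix.head_cons, Matrix.cons_val_two, Matrix.cons_val_three,
      Matrix.tail_cons] <;>
    decide

/-- The homomorphism to `Perm (Fin 7)`. -/
def φ : PresentedGroup seifertRels →* Equiv.Perm (Fin 7) := PresentedGroup.toGroup pf_rels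

section
variable {G : Type*} [Group G]

/-- Core argument: if `a² = b³ = c⁷ = t`, `abc = t³` with a left-invariant strict total
order in which `1 < t`, we get a contradiction. -/
lemma key {a b c t : G} (ha : a ^ 2 = t) (hb : b ^ 3 = t) (hc : c ^ 7 = t)
    (habc : a * b * c = t ^ 3)
    (r : G → G → Prop) (hto : IsStrictTotalOrder G r)
    (hl : ∀ x y z : G, r x y ↔ r (z * x) (z * y)) (h1t : r 1 t) : False := by
  haveI := hto
  have step : ∀ (z x y : G), r x y → r (z * x) (z * y) := fun z x y h => (hl x y z).mp h
  have tr : ∀ {x y z : G}, r x y → r y z → r x z := fun h h' => trans_of r h h'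
  have ir : ∀ x : G, ¬ r x x := fun x => irrefl_of r x
  -- positive powers of positive elements
  have hpos : ∀ (g : G), r 1 g → ∀ n : ℕ, r 1 (g ^ (n + 1)) := by
    intro g hg n
    induction n with
    | zero => simpa using hg
    | succ n ih =>
      have := step g _ _ ih
      rw [mul_one] at this
      have : r 1 (g * g ^ (n + 1)) := tr hg this
      rwa [← pow_succ'] at this
  have hneg : ∀ (g : G), r g 1 → ∀ n : ℕ, r (g ^ (n + 1)) 1 := by
    intro g hg n
    induction n with
    | zero => simpa using hg
    | succ n ih =>
      have := step (g ^ (n + 1)) _ _ hg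
      rw [mul_one, ← pow_succ] at this
      exact tr this ih
  -- g positive implies g < g^(n+2)
  have hlt : ∀ (g : G), r 1 g → ∀ n : ℕ, r g (g ^ (n + 2)) := by
    intro g hg n
    have := step g _ _ (hpos g hg n)
    rw [mul_one, ← pow_succ'] at this
    exact this
  -- each generator is positive and less than t
  have gen : ∀ (g : G) (n : ℕ), g ^ (n + 2) = t → r 1 g ∧ r g t := by
    intro g n hg
    rcases trichotomous_of r 1 g with h | h | h
    · exact ⟨h, hg ▸ hlt g h n⟩
    · exfalso; rw [← h, one_pow] at hg; exact ir 1 (hg ▸ h1t)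
    · exfalso
      have := hneg g h (n + 1)
      rw [hg] at this
      exact ir t (tr this h1t)
  obtain ⟨hposa, hat⟩ := gen a 0 ha
  obtain ⟨hposb, hbt⟩ := gen b 1 hb
  obtain ⟨hposc, hct⟩ := gen c 5 hc
  -- t is central enough: t commutes with a and b
  have hta : t * a = a * t := by rw [← ha]; group
  have htb : t * b = b * t := by rw [← hb]; group
  -- abc < abt
  have h1 : r (a * b * c) (a * b * t) := step (a * b) _ _ hct
  -- abt < att : b*t = t*b < t*t
  have h2 : r (a * b * t) (a * t * t) := by
    have : r (t * b) (t * t) := step t _ _ hbt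
    rw [htb] at this
    have := step a _ _ this
    rwa [← mul_assoc, ← mul_assoc] at this
  -- att < ttt : a*t = t*a < t*t
  have h3 : r (a * t * t) (t * t * t) := by
    have : r (t * a) (t * t) := step t _ _ hat
    rw [hta] at this
    have := step t _ _ this
    rwa [← mul_assoc, ← mul_assoc, hta] at this
  have : r (a * b * c) (t * t * t) := tr h1 (tr h2 h3)
  rw [habc] at this
  exact ir _ (by rwa [show t ^ 3 = t * t * t by rw [pow_succ, pow_succ, pow_one]] at this)

end

end Stmt16Aux

open Stmt16Aux in
/-- The group `⟨a,b,c,t | a² = t, b³ = t, c⁷ = t, abc = t³⟩` admits no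
left-invariant total order. -/
theorem stmt16 :
    ¬ ∃ r : PresentedGroup seifertRels → PresentedGroup seifertRels → Prop,
        IsStrictTotalOrder (PresentedGroup seifertRels) r ∧
        ∀ a b c : PresentedGroup seifertRels, r a b ↔ r (c * a) (c * b) := by
  rintro ⟨r, hto, hl⟩
  haveI := hto
  set a : PresentedGroup seifertRels := PresentedGroup.of 0 with ha'
  set b : PresentedGroup seifertRels := PresentedGroup.of 1 with hb'
  set c : PresentedGroup seifertRels := PresentedGroup.of 2 with hc'
  set t : PresentedGroup seifertRels := PresentedGroup.of 3 with ht'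
  -- the relations hold in G
  have rel : ∀ x ∈ seifertRels, PresentedGroup.mk seifertRels x = 1 := by
    intro x hx
    exact (QuotientGroup.eq_one_iff x).mpr (Subgroup.subset_normalClosure hx)
  have ha : a ^ 2 = t := by
    have := rel _ (show ((FreeGroup.of 0) ^ 2 * (FreeGroup.of 3)⁻¹ : FreeGroup (Fin 4))
      ∈ seifertRels by left; rfl)
    simp only [map_mul, map_pow, map_inv] at this
    rw [mul_inv_eq_one] at this
    exact this
  have hb : b ^ 3 = t := by
    have := rel _ (show ((FreeGroup.of 1) ^ 3 * (FreeGroup.of 3)⁻¹ : FreeGroup (Fin 4))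
      ∈ seifertRels by right; left; rfl)
    simp only [map_mul, map_pow, map_inv] at this
    rw [mul_inv_eq_one] at this
    exact this
  have hc : c ^ 7 = t := by
    have := rel _ (show ((FreeGroup.of 2) ^ 7 * (FreeGroup.of 3)⁻¹ : FreeGroup (Fin 4))
      ∈ seifertRels by right; right; left; rfl)
    simp only [map_mul, map_pow, map_inv] at this
    rw [mul_inv_eq_one] at this
    exact this
  have habc : a * b * c = t ^ 3 := by
    have := rel _ (show ((FreeGroup.of 0) * (FreeGroup.of 1) * (FreeGroup.of 2) *
        ((FreeGroup.of 3) ^ 3)⁻¹ : FreeGroup (Fin 4)) ∈ seifertRels by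
      right; right; right; rfl)
    simp only [map_mul, map_pow, map_inv] at this
    rw [mul_inv_eq_one] at this
    exact this
  have step : ∀ (z x y : PresentedGroup seifertRels), r x y → r (z * x) (z * y) :=
    fun z x y h => (hl x y z).mp h
  have tr : ∀ {x y z : PresentedGroup seifertRels}, r x y → r y z → r x z :=
    fun h h' => trans_of r h h'
  have ir : ∀ x : PresentedGroup seifertRels, ¬ r x x := fun x => irrefl_of r x
  rcases trichotomous_of r 1 t with h | h | h
  · exact key ha hb hc habc r hto hl h
  · -- t = 1 : then a² = 1 so a = 1, contradicting φ a = px ≠ 1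
    have ha1 : a ^ 2 = 1 := by rw [ha, ← h]
    have haa : a * a = 1 := by rw [← sq]; exact ha1
    have hA : a = 1 := by
      rcases trichotomous_of r 1 a with h' | h' | h'
      · exfalso
        have := step a _ _ h'
        rw [mul_one, haa] at this
        exact ir 1 (tr h' this)
      · exact h'.symm
      · exfalso
        have := step a _ _ h'
        rw [mul_one, haa] at this
        exact ir a (tr h' this)
    have : φ a = px := by
      rw [ha']
      show PresentedGroup.toGroup pf_rels (PresentedGroup.of 0) = px
      rw [PresentedGroup.toGroup.of]
      rfl
    rw [hA, map_one] at this
    exact (by decide : px ≠ 1) this.symm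
  · -- t < 1 : use the reversed order
    refine key ha hb hc habc (fun x y => r y x) ?_ (fun x y z => hl y x z) h
    exact { trichotomous := fun x y h1 h2 => (trichotomous_of r x y).elim (fun h => absurd h h2)
              (fun h => h.elim id (fun h => absurd h h1)),
            irrefl := fun x => irrefl_of r x,
            trans := fun x y z hxy hyz => trans_of r hyz hxy }
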